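/- Let H = p₁² + p₂² + m²q₁² + n²q₂² + a q₁ + b q₂^(-2) on q₂ > 0, with I₁ = p₁² + m²q₁² + a q₁ and I₂ = p₂² + n²q₂² + b q₂^(-2). Define the complex-valued functions A = 2i·m·p₁ + 2m²q₁ + a and B = 2i·n·p₂q₂ + p₂² - n²q₂² + b q₂^(-2). Then for any positive integers m', n' with m = m' and n = n' integers, X = A^(2n) · B^(m) satisfies {H, X} = 0. -/

import Mathlib

open Complex in
/-- Canonical Poisson bracket, extended ℂ-bilinearly, for ℂ-valued functions on ℝ⁴. -/
noncomputable def pbC (F G : ℝ → ℝ → ℝ → ℝ → ℂ) (q1 q2 p1 p2 : ℝ) : ℂ :=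
  deriv (fun x => F x q2 p1 p2) q1 * deriv (fun x => G q1 q2 x p2) p1
  + deriv (fun x => F q1 x p1 p2) q2 * deriv (fun x => G q1 q2 p1 x) p2
  - deriv (fun x => F q1 q2 x p2) p1 * deriv (fun x => G x q2 p1 p2) q1
  - deriv (fun x => F q1 q2 p1 x) p2 * deriv (fun x => G q1 x p1 p2) q2

noncomputable def H (m n : ℕ) (a b : ℝ) (q1 q2 p1 p2 : ℝ) : ℂ :=
  ((p1 ^ 2 + p2 ^ 2 + (m : ℝ) ^ 2 * q1 ^ 2 + (n : ℝ) ^ 2 * q2 ^ 2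
    + a * q1 + b / q2 ^ 2 : ℝ) : ℂ)

noncomputable def A (m : ℕ) (a : ℝ) (q1 p1 : ℝ) : ℂ :=
  2 * Complex.I * (m : ℂ) * (p1 : ℂ) + 2 * (m : ℂ) ^ 2 * (q1 : ℂ) + (a : ℂ)

noncomputable def B (n : ℕ) (b : ℝ) (q2 p2 : ℝ) : ℂ :=
  2 * Complex.I * (n : ℂ) * (p2 : ℂ) * (q2 : ℂ) + (p2 : ℂ) ^ 2
  - (n : ℂ) ^ 2 * (q2 : ℂ) ^ 2 + (b : ℂ) / (q2 : ℂ) ^ 2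

noncomputable def X (m n : ℕ) (a b : ℝ) (q1 q2 p1 p2 : ℝ) : ℂ :=
  A m a q1 p1 ^ (2 * n) * B n b q2 p2 ^ m


private lemma powC {f : ℝ → ℂ} {f' : ℂ} {x : ℝ} (N : ℕ) (hf : HasDerivAt f f' x) :
    HasDerivAt (fun y => f y ^ N) (f' * ((N : ℂ) * f x ^ (N - 1))) x := by
  have h := HasDerivAt.scomp (g₁ := fun z : ℂ => z ^ N) (g₁' := (N : ℂ) * f x ^ (N - 1))
    (x := x) (hasDerivAt_pow N (f x)) hf
  simp only [Function.comp, smul_eq_mul] at h; exact h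

theorem stmt18 (m n : ℕ) (hm : 0 < m) (hn : 0 < n) (a b : ℝ)
    (q1 q2 p1 p2 : ℝ) (hq2 : 0 < q2) :
    pbC (H m n a b) (X m n a b) q1 q2 p1 p2 = 0 := by
  have hq2r : q2 ≠ 0 := hq2.ne'
  have hq2c : (q2 : ℂ) ≠ 0 := by exact_mod_cast hq2r
  have hxC : ∀ x : ℝ, HasDerivAt (fun y : ℝ => (y : ℂ)) 1 x :=
    fun x => (hasDerivAt_id x).ofReal_comp
  -- H derivatives
  have d1 : HasDerivAt (fun x => H m n a b x q2 p1 p2)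
      ((2 * (m:ℝ)^2 * q1 + a : ℝ) : ℂ) q1 := by
    unfold H
    refine HasDerivAt.ofReal_comp ?_
    have h1 := ((((((hasDerivAt_pow 2 q1).const_mul ((m:ℝ)^2)).const_add
      (p1^2 + p2^2)).add_const ((n:ℝ)^2 * q2^2)).add
      ((hasDerivAt_id q1).const_mul a)).add_const (b / q2^2))
    refine HasDerivAt.congr_deriv h1 ?_
    ring
  have d2 : HasDerivAt (fun x => H m n a b q1 x p1 p2)
      ((2 * (n:ℝ)^2 * q2 - 2 * b / q2^3 : ℝ) : ℂ) q2 := by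
    unfold H
    refine HasDerivAt.ofReal_comp ?_
    have h1 := (((((hasDerivAt_pow 2 q2).const_mul ((n:ℝ)^2)).const_add
      (p1^2 + p2^2 + (m:ℝ)^2 * q1^2)).add_const (a * q1)).add
      ((hasDerivAt_const q2 b).div (hasDerivAt_pow 2 q2) (pow_ne_zero 2 hq2r)))
    refine HasDerivAt.congr_deriv h1 ?_
    field_simp
    ring
  have d3 : HasDerivAt (fun x => H m n a b q1 q2 x p2) ((2 * p1 : ℝ) : ℂ) p1 := by
    unfold H
    refine HasDerivAt.ofReal_comp ?_
    have h1 := hasDerivAt_pow 2 p1 |>.add_const (p2^2)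
      |>.add_const ((m:ℝ)^2 * q1^2) |>.add_const ((n:ℝ)^2 * q2^2)
      |>.add_const (a * q1) |>.add_const (b / q2^2)
    refine HasDerivAt.congr_deriv h1 ?_
    ring
  have d4 : HasDerivAt (fun x => H m n a b q1 q2 p1 x) ((2 * p2 : ℝ) : ℂ) p2 := by
    unfold H
    refine HasDerivAt.ofReal_comp ?_
    have h1 := hasDerivAt_pow 2 p2 |>.const_add (p1^2)
      |>.add_const ((m:ℝ)^2 * q1^2) |>.add_const ((n:ℝ)^2 * q2^2)
      |>.add_const (a * q1) |>.add_const (b / q2^2)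
    refine HasDerivAt.congr_deriv h1 ?_
    ring
  -- A derivatives
  have hA : HasDerivAt (fun x : ℝ => A m a x p1) (2 * (m:ℂ)^2) q1 := by
    unfold A
    have h1 := (((hxC q1).const_mul (2 * (m:ℂ)^2)).const_add
      (2 * Complex.I * (m:ℂ) * (p1:ℂ))).add_const ((a:ℝ) : ℂ)
    refine HasDerivAt.congr_deriv h1 ?_
    ring
  have hAp : HasDerivAt (fun x : ℝ => A m a q1 x) (2 * Complex.I * (m:ℂ)) p1 := by
    unfold A
    have h1 := (((hxC p1).const_mul (2 * Complex.I * (m:ℂ))).add_const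
      (2 * (m:ℂ)^2 * (q1:ℂ))).add_const ((a:ℝ) : ℂ)
    refine HasDerivAt.congr_deriv h1 ?_
    ring
  -- B derivatives
  have hB : HasDerivAt (fun x : ℝ => B n b x p2)
      (2 * Complex.I * (n:ℂ) * (p2:ℂ) - 2 * (n:ℂ)^2 * (q2:ℂ)
        - 2 * (b:ℂ) / (q2:ℂ)^3) q2 := by
    unfold B
    have t1 := ((hxC q2).const_mul (2 * Complex.I * (n:ℂ) * (p2:ℂ))).add_const
      ((p2:ℂ)^2)
    have t2 := (powC 2 (hxC q2)).const_mul ((n:ℂ)^2)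
    have t3 := (hasDerivAt_const q2 ((b:ℝ):ℂ)).div (powC 2 (hxC q2))
      (pow_ne_zero 2 hq2c)
    have h1 := (t1.sub t2).add t3
    refine HasDerivAt.congr_deriv h1 ?_
    field_simp
    ring
  have hBp : HasDerivAt (fun x : ℝ => B n b q2 x)
      (2 * Complex.I * (n:ℂ) * (q2:ℂ) + 2 * (p2:ℂ)) p2 := by
    unfold B
    have t1 := ((hxC p2).const_mul (2 * Complex.I * (n:ℂ))).mul_const ((q2:ℂ))
    have t2 := powC 2 (hxC p2)
    have h1 := ((t1.add t2).sub_const ((n:ℂ)^2 * (q2:ℂ)^2)).add_const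
      ((b:ℂ) / (q2:ℂ)^2)
    refine HasDerivAt.congr_deriv h1 ?_
    ring
  -- X derivatives
  have D1 : HasDerivAt (fun x => X m n a b x q2 p1 p2)
      ((2 * (m:ℂ)^2) * (((2*n : ℕ) : ℂ) * A m a q1 p1 ^ (2*n - 1))
        * B n b q2 p2 ^ m) q1 := by
    unfold X; exact (powC (2*n) hA).mul_const _
  have D2 : HasDerivAt (fun x => X m n a b q1 q2 x p2)
      ((2 * Complex.I * (m:ℂ)) * (((2*n : ℕ) : ℂ) * A m a q1 p1 ^ (2*n - 1))
        * B n b q2 p2 ^ m) p1 := by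
    unfold X; exact (powC (2*n) hAp).mul_const _
  have D3 : HasDerivAt (fun x => X m n a b q1 x p1 p2)
      (A m a q1 p1 ^ (2*n) * ((2 * Complex.I * (n:ℂ) * (p2:ℂ) - 2 * (n:ℂ)^2 * (q2:ℂ)
          - 2 * (b:ℂ) / (q2:ℂ)^3) * ((m : ℂ) * B n b q2 p2 ^ (m - 1)))) q2 := by
    unfold X; exact (powC m hB).const_mul _
  have D4 : HasDerivAt (fun x => X m n a b q1 q2 p1 x)
      (A m a q1 p1 ^ (2*n) * ((2 * Complex.I * (n:ℂ) * (q2:ℂ) + 2 * (p2:ℂ))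
        * ((m : ℂ) * B n b q2 p2 ^ (m - 1)))) p2 := by
    unfold X; exact (powC m hBp).const_mul _
  unfold pbC
  rw [d1.deriv, d2.deriv, d3.deriv, d4.deriv, D1.deriv, D2.deriv, D3.deriv, D4.deriv]
  have hApow : A m a q1 p1 ^ (2*n) = A m a q1 p1 ^ (2*n - 1) * A m a q1 p1 := by
    rw [← pow_succ]; congr 1; omega
  have hBpow : B n b q2 p2 ^ m = B n b q2 p2 ^ (m - 1) * B n b q2 p2 := by
    rw [← pow_succ]; congr 1; omega
  rw [hApow, hBpow]
  have L1 : 2*Complex.I*(m:ℂ) * A m a q1 p1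
      = (2*(m:ℂ)^2*(q1:ℂ) + (a:ℂ)) * (2*Complex.I*(m:ℂ))
        - 2*(p1:ℂ) * (2*(m:ℂ)^2) := by
    unfold A; linear_combination (4*(m:ℂ)^2*(p1:ℂ)) * Complex.I_sq
  have L2 : -(4*Complex.I*(n:ℂ)) * B n b q2 p2
      = (2*(n:ℂ)^2*(q2:ℂ) - 2*(b:ℂ)/(q2:ℂ)^3)
          * (2*Complex.I*(n:ℂ)*(q2:ℂ) + 2*(p2:ℂ))
        - 2*(p2:ℂ) * (2*Complex.I*(n:ℂ)*(p2:ℂ) - 2*(n:ℂ)^2*(q2:ℂ)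
          - 2*(b:ℂ)/(q2:ℂ)^3) := by
    unfold B; field_simp
    linear_combination (-(8:ℂ)*(n:ℂ)^2*(p2:ℂ)*(q2:ℂ)^4) * Complex.I_sq
  push_cast
  linear_combination (-(2*(n:ℂ) * A m a q1 p1 ^ (2*n - 1) * B n b q2 p2 ^ (m - 1)
      * B n b q2 p2)) * L1
    - ((m:ℂ) * A m a q1 p1 ^ (2*n - 1) * A m a q1 p1 * B n b q2 p2 ^ (m - 1)) * L2
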